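/- Fix two alternatives, n agents, and any family (u_p)_{p ∈ [0,1]} of single-peaked utility functions, one per peak. If a mechanism f : [0,1]^n → [0,1] is continuous, strategyproof on this domain, and proportional, then f is the uniform phantom rule: f(p_1, …, p_n) = med(p_1, …, p_n, 0, 1/n, 2/n, …, (n−1)/n, 1) for every profile. -/

import Mathlib

/-- `u` is single-peaked on `[0,1]` with peak `p`. -/
def SinglePeaked (p : ℝ) (u : ℝ → ℝ) : Prop :=
  ∀ q ∈ Set.Icc (0:ℝ) 1, q ≠ p → ∀ l ∈ Set.Ioo (0:ℝ) 1,
    u q < u (l * p + (1 - l) * q) ∧ u (l * p + (1 - l) * q) < u p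

/-- Median (middle element of the sorted list, for lists of odd length). -/
noncomputable def med (l : List ℝ) : ℝ :=
  (l.insertionSort (· ≤ ·)).getD (l.length / 2) 0

/- ---------- auxiliary lemmas ---------- -/

abbrev UPValid {n : ℕ} (P : Fin n → ℝ) : Prop := ∀ i, P i ∈ Set.Icc (0:ℝ) 1

lemma sp_lt_peak {p : ℝ} {u : ℝ → ℝ} (h : SinglePeaked p u)
    {x : ℝ} (hx : x ∈ Set.Icc (0:ℝ) 1) (hne : x ≠ p) : u x < u p := by
  have h2 := h x hx hne (1/2) (by norm_num)
  exact h2.1.trans h2.2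

lemma sp_mono_left {p : ℝ} {u : ℝ → ℝ} (h : SinglePeaked p u)
    {x y : ℝ} (hx : x ∈ Set.Icc (0:ℝ) 1) (hxy : x < y) (hyp : y ≤ p) : u x < u y := by
  rcases eq_or_lt_of_le hyp with rfl | hyp'
  · exact sp_lt_peak h hx hxy.ne
  · have hxp : x < p := hxy.trans hyp'
    set l : ℝ := (y - x) / (p - x) with hl
    have hpx : (0:ℝ) < p - x := by linarith
    have hl0 : 0 < l := div_pos (by linarith) hpx
    have hl1 : l < 1 := (div_lt_one hpx).2 (by linarith)
    have hco : l * p + (1 - l) * x = y := by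
      have hlm : l * (p - x) = y - x := by
        rw [hl, div_mul_eq_mul_div, mul_div_assoc, div_self hpx.ne', mul_one]
      linarith
    have := (h x hx hxp.ne (l) ⟨hl0, hl1⟩).1
    rwa [hco] at this

lemma sp_mono_right {p : ℝ} {u : ℝ → ℝ} (h : SinglePeaked p u)
    {x y : ℝ} (hy : y ∈ Set.Icc (0:ℝ) 1) (hpx : p ≤ x) (hxy : x < y) : u y < u x := by
  rcases eq_or_lt_of_le hpx with rfl | hpx'
  · exact sp_lt_peak h hy hxy.ne'
  · have hyp : p < y := hpx'.trans hxy
    set l : ℝ := (y - x) / (y - p) with hl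
    have hypos : (0:ℝ) < y - p := by linarith
    have hl0 : 0 < l := div_pos (by linarith) hypos
    have hl1 : l < 1 := (div_lt_one hypos).2 (by linarith)
    have hco : l * p + (1 - l) * y = x := by
      have hlm : l * (y - p) = y - x := by
        rw [hl, div_mul_eq_mul_div, mul_div_assoc, div_self hypos.ne', mul_one]
      linarith
    have := (h y hy hyp.ne' (l) ⟨hl0, hl1⟩).1
    rwa [hco] at this

lemma valid_update {n : ℕ} {P : Fin n → ℝ} (hP : UPValid P) {i : Fin n} {t : ℝ}
    (ht : t ∈ Set.Icc (0:ℝ) 1) : UPValid (Function.update P i t) := by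
  intro j
  rcases eq_or_ne j i with rfl | hji
  · simpa using ht
  · simpa [Function.update_of_ne hji] using hP j

lemma my_filter_mono {α : Type*} {s : Finset α} {p q : α → Prop}
    [DecidablePred p] [DecidablePred q] (h : ∀ a, p a → q a) :
    s.filter p ⊆ s.filter q := by
  intro a ha
  rw [Finset.mem_filter] at ha ⊢
  exact ⟨ha.1, h a ha.2⟩

section
variable {n : ℕ}
  (u : ℝ → ℝ → ℝ) (hu : ∀ p ∈ Set.Icc (0:ℝ) 1, SinglePeaked p (u p))
  (f : (Fin n → ℝ) → ℝ)
  (hfr : ∀ P : Fin n → ℝ, UPValid P → f P ∈ Set.Icc (0:ℝ) 1)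
  (hfc : ContinuousOn f {P : Fin n → ℝ | ∀ i, P i ∈ Set.Icc (0:ℝ) 1})
  (hfsp : ∀ P : Fin n → ℝ, UPValid P → ∀ i, ∀ p' ∈ Set.Icc (0:ℝ) 1,
      u (P i) (f (Function.update P i p')) ≤ u (P i) (f P))

include hu hfr hfsp in
lemma sp_key_up {P : Fin n → ℝ} (hP : UPValid P) (i : Fin n)
    (hpi : f P < P i) {t : ℝ} (ht1 : f P ≤ t) (ht2 : t ≤ 1) :
    f (Function.update P i t) = f P ∨ P i < f (Function.update P i t) := by
  set x := f P with hx
  have hx01 : x ∈ Set.Icc (0:ℝ) 1 := hfr P hP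
  have ht01 : t ∈ Set.Icc (0:ℝ) 1 := ⟨hx01.1.trans ht1, ht2⟩
  set y := f (Function.update P i t) with hy
  have hy01 : y ∈ Set.Icc (0:ℝ) 1 := hfr _ (valid_update hP ht01)
  have h1 : u (P i) y ≤ u (P i) x := hfsp P hP i t ht01
  have h2 : u t x ≤ u t y := by
    have := hfsp (Function.update P i t) (valid_update hP ht01) i (P i) (hP i)
    rwa [Function.update_idem, Function.update_eq_self, Function.update_self] at this
  have hyx : x ≤ y := by
    by_contra hc
    push_neg at hc
    exact absurd h2 (not_le.2 (sp_mono_left (hu t ht01) hy01 hc ht1))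
  rcases eq_or_lt_of_le hyx with h | h
  · exact Or.inl h.symm
  · right
    by_contra hc
    push_neg at hc
    exact absurd h1 (not_le.2 (sp_mono_left (hu (P i) (hP i)) hx01 h hc))

include hu hfr hfc hfsp in
lemma uncomp_up {P : Fin n → ℝ} (hP : UPValid P) (i : Fin n)
    (hpi : f P < P i) {t : ℝ} (ht1 : f P ≤ t) (ht2 : t ≤ 1) :
    f (Function.update P i t) = f P := by
  set x := f P with hx
  have hx01 : x ∈ Set.Icc (0:ℝ) 1 := hfr P hP
  set g : ℝ → ℝ := fun s => f (Function.update P i s) with hg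
  have hgc : ContinuousOn g (Set.Icc x 1) := by
    apply hfc.comp ((continuous_const.update i continuous_id).continuousOn)
    intro s hs
    exact valid_update hP ⟨hx01.1.trans hs.1, hs.2⟩
  have hgP : g (P i) = x := by
    simp only [hg, Function.update_eq_self]
    exact hx.symm
  rcases sp_key_up u hu f hfr hfsp hP i hpi ht1 ht2 with h | h
  · exact h
  exfalso
  set z : ℝ := (x + P i) / 2 with hz
  have hzx : x < z := by simp only [hz]; linarith
  have hzp : z < P i := by simp only [hz]; linarith
  have hPi1 : P i ≤ 1 := (hP i).2
  have hmem : ∃ s ∈ Set.Icc x 1, g s = z := by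
    rcases le_total (P i) t with hle | hle
    · have hsub : Set.Icc (P i) t ⊆ Set.Icc x 1 := Set.Icc_subset_Icc hpi.le ht2
      have := intermediate_value_Icc hle (hgc.mono hsub)
      have hzmem : z ∈ Set.Icc (g (P i)) (g t) := ⟨hgP ▸ hzx.le, le_of_lt (hzp.trans h)⟩
      rcases this hzmem with ⟨s, hs, hgs⟩
      exact ⟨s, hsub hs, hgs⟩
    · have hsub : Set.Icc t (P i) ⊆ Set.Icc x 1 := Set.Icc_subset_Icc ht1 hPi1
      have := intermediate_value_Icc' hle (hgc.mono hsub)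
      have hzmem : z ∈ Set.Icc (g (P i)) (g t) := ⟨hgP ▸ hzx.le, le_of_lt (hzp.trans h)⟩
      rcases this hzmem with ⟨s, hs, hgs⟩
      exact ⟨s, hsub hs, hgs⟩
  rcases hmem with ⟨s, hs, hgs⟩
  rcases sp_key_up u hu f hfr hfsp hP i hpi hs.1 hs.2 with h' | h'
  · rw [show f (Function.update P i s) = g s from rfl, hgs] at h'
    exact hzx.ne' h'
  · rw [show f (Function.update P i s) = g s from rfl, hgs] at h'
    exact absurd h' (not_lt.2 hzp.le)

include hu hfr hfsp in
lemma sp_key_down {P : Fin n → ℝ} (hP : UPValid P) (i : Fin n)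
    (hpi : P i < f P) {t : ℝ} (ht1 : 0 ≤ t) (ht2 : t ≤ f P) :
    f (Function.update P i t) = f P ∨ f (Function.update P i t) < P i := by
  set x := f P with hx
  have hx01 : x ∈ Set.Icc (0:ℝ) 1 := hfr P hP
  have ht01 : t ∈ Set.Icc (0:ℝ) 1 := ⟨ht1, ht2.trans hx01.2⟩
  set y := f (Function.update P i t) with hy
  have hy01 : y ∈ Set.Icc (0:ℝ) 1 := hfr _ (valid_update hP ht01)
  have h1 : u (P i) y ≤ u (P i) x := hfsp P hP i t ht01
  have h2 : u t x ≤ u t y := by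
    have := hfsp (Function.update P i t) (valid_update hP ht01) i (P i) (hP i)
    rwa [Function.update_idem, Function.update_eq_self, Function.update_self] at this
  have hyx : y ≤ x := by
    by_contra hc
    push_neg at hc
    exact absurd h2 (not_le.2 (sp_mono_right (hu t ht01) hy01 ht2 hc))
  rcases eq_or_lt_of_le hyx with h | h
  · exact Or.inl h
  · right
    by_contra hc
    push_neg at hc
    exact absurd h1 (not_le.2 (sp_mono_right (hu (P i) (hP i)) hx01 hc h))

include hu hfr hfc hfsp in
lemma uncomp_down {P : Fin n → ℝ} (hP : UPValid P) (i : Fin n)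
    (hpi : P i < f P) {t : ℝ} (ht1 : 0 ≤ t) (ht2 : t ≤ f P) :
    f (Function.update P i t) = f P := by
  set x := f P with hx
  have hx01 : x ∈ Set.Icc (0:ℝ) 1 := hfr P hP
  set g : ℝ → ℝ := fun s => f (Function.update P i s) with hg
  have hgc : ContinuousOn g (Set.Icc 0 x) := by
    apply hfc.comp ((continuous_const.update i continuous_id).continuousOn)
    intro s hs
    exact valid_update hP ⟨hs.1, hs.2.trans hx01.2⟩
  have hgP : g (P i) = x := by
    simp only [hg, Function.update_eq_self]
    exact hx.symm
  rcases sp_key_down u hu f hfr hfsp hP i hpi ht1 ht2 with h | h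
  · exact h
  exfalso
  set z : ℝ := (x + P i) / 2 with hz
  have hzx : z < x := by simp only [hz]; linarith
  have hzp : P i < z := by simp only [hz]; linarith
  have hPi0 : 0 ≤ P i := (hP i).1
  have hmem : ∃ s ∈ Set.Icc (0:ℝ) x, g s = z := by
    rcases le_total (P i) t with hle | hle
    · have hsub : Set.Icc (P i) t ⊆ Set.Icc 0 x := Set.Icc_subset_Icc hPi0 ht2
      have := intermediate_value_Icc' hle (hgc.mono hsub)
      have hzmem : z ∈ Set.Icc (g t) (g (P i)) := ⟨le_of_lt (h.trans hzp), hgP ▸ hzx.le⟩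
      rcases this hzmem with ⟨s, hs, hgs⟩
      exact ⟨s, hsub hs, hgs⟩
    · have hsub : Set.Icc t (P i) ⊆ Set.Icc 0 x := Set.Icc_subset_Icc ht1 hpi.le
      have := intermediate_value_Icc hle (hgc.mono hsub)
      have hzmem : z ∈ Set.Icc (g t) (g (P i)) := ⟨le_of_lt (h.trans hzp), hgP ▸ hzx.le⟩
      rcases this hzmem with ⟨s, hs, hgs⟩
      exact ⟨s, hsub hs, hgs⟩
  rcases hmem with ⟨s, hs, hgs⟩
  rcases sp_key_down u hu f hfr hfsp hP i hpi hs.1 hs.2 with h' | h'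
  · rw [show f (Function.update P i s) = g s from rfl, hgs] at h'
    exact hzx.ne h'
  · rw [show f (Function.update P i s) = g s from rfl, hgs] at h'
    exact absurd h' (not_lt.2 hzp.le)

include hu hfr hfc hfsp in
lemma up_move {P Q : Fin n → ℝ} (hP : UPValid P) (hQ : UPValid Q)
    (hcond : ∀ i, Q i = P i ∨ (f Q < Q i ∧ f Q ≤ P i) ∨ (Q i < f Q ∧ P i ≤ f Q)) :
    f P = f Q := by
  have key : ∀ s : Finset (Fin n), f (fun i => if i ∈ s then P i else Q i) = f Q := by
    intro s
    induction s using Finset.induction with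
    | empty => simp
    | @insert j s hj ih =>
      set R : Fin n → ℝ := fun i => if i ∈ s then P i else Q i with hR
      have hRv : UPValid R := by
        intro i
        simp only [hR]
        split
        · exact hP i
        · exact hQ i
      have hnew : (fun i => if i ∈ insert j s then P i else Q i) = Function.update R j (P j) := by
        funext i
        rcases eq_or_ne i j with rfl | hij
        · simp [Function.update_self]
        · simp [Function.update_of_ne hij, hR, hij]
      rw [hnew]
      have hRj : R j = Q j := by simp [hR, hj]
      rcases hcond j with h | ⟨h1, h2⟩ | ⟨h1, h2⟩
      · rw [show Function.update R j (P j) = R by rw [← h, ← hRj, Function.update_eq_self]]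
        exact ih
      · rw [uncomp_up u hu f hfr hfc hfsp hRv j (by rw [ih, hRj]; exact h1)
          (by rw [ih]; exact h2) (hP j).2, ih]
      · rw [uncomp_down u hu f hfr hfc hfsp hRv j (by rw [ih, hRj]; exact h1)
          (hP j).1 (by rw [ih]; exact h2), ih]
  have := key Finset.univ
  simpa using this

variable (hprop : ∀ P : Fin n → ℝ, (∀ i, P i = 0 ∨ P i = 1) →
    f P = ((Finset.univ.filter (fun i => P i = 1)).card : ℝ) / (n : ℝ))

include hu hfr hfc hfsp hprop in
lemma up_quota (P : Fin n → ℝ) (hP : UPValid P) (k : ℕ)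
    (ha : (Finset.univ.filter fun i => (k:ℝ)/(n:ℝ) < P i).card ≤ k)
    (hb : (Finset.univ.filter fun i => P i < (k:ℝ)/(n:ℝ)).card + k ≤ n) :
    f P = (k:ℝ)/(n:ℝ) := by
  classical
  set μ : ℝ := (k:ℝ)/(n:ℝ) with hμ
  set A : Finset (Fin n) := Finset.univ.filter (fun i => μ < P i) with hA
  set B : Finset (Fin n) := Finset.univ.filter (fun i => P i < μ) with hB
  set S : Finset (Fin n) := Finset.univ.filter (fun i => P i = μ) with hS
  have hdisAB : Disjoint A B := by
    rw [Finset.disjoint_left]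
    intro i hiA hiB
    simp only [hA, hB, Finset.mem_filter] at hiA hiB
    linarith [hiA.2, hiB.2]
  have hdisAS : Disjoint A S := by
    rw [Finset.disjoint_left]
    intro i hiA hiS
    simp only [hA, hS, Finset.mem_filter] at hiA hiS
    linarith [hiA.2, le_of_eq hiS.2]
  have hdisBS : Disjoint B S := by
    rw [Finset.disjoint_left]
    intro i hiB hiS
    simp only [hB, hS, Finset.mem_filter] at hiB hiS
    linarith [hiB.2, le_of_eq hiS.2]
  have hunion : A ∪ B ∪ S = Finset.univ := by
    ext i
    simp only [hA, hB, hS, Finset.mem_union, Finset.mem_filter, Finset.mem_univ, true_and,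
      iff_true]
    rcases lt_trichotomy (P i) μ with h | h | h
    · exact Or.inl (Or.inr h)
    · exact Or.inr h
    · exact Or.inl (Or.inl h)
  have hcards : A.card + B.card + S.card = n := by
    have h1 : (A ∪ B ∪ S).card = n := by rw [hunion]; simp
    rw [Finset.card_union_of_disjoint (by
        rw [Finset.disjoint_union_left]; exact ⟨hdisAS, hdisBS⟩),
      Finset.card_union_of_disjoint hdisAB] at h1
    exact h1
  have hak : A.card ≤ k := ha
  have hbk : B.card + k ≤ n := hb
  obtain ⟨T, hTS, hTcard⟩ := Finset.exists_subset_card_eq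
    (show k - A.card ≤ S.card by omega)
  set Q : Fin n → ℝ := fun i => if i ∈ A ∪ T then 1 else 0 with hQ
  have hQv : UPValid Q := by
    intro i
    simp only [hQ]
    split <;> norm_num
  have hQsm : ∀ i, Q i = 0 ∨ Q i = 1 := by
    intro i
    simp only [hQ]
    split
    · exact Or.inr rfl
    · exact Or.inl rfl
  have hfilter : Finset.univ.filter (fun i => Q i = 1) = A ∪ T := by
    ext i
    simp only [Finset.mem_filter, Finset.mem_univ, true_and, hQ]
    by_cases h : i ∈ A ∪ T
    · rw [if_pos h]; simp [h]
    · rw [if_neg h]; norm_num [h]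
  have hdisAT : Disjoint A T := hdisAS.mono_right hTS
  have hcardAT : (A ∪ T).card = k := by
    rw [Finset.card_union_of_disjoint hdisAT, hTcard]
    omega
  have hfQ : f Q = μ := by
    rw [hprop Q hQsm, hfilter, hcardAT]
  have hμ0 : 0 ≤ μ := by positivity
  have hcond : ∀ i, Q i = P i ∨ (f Q < Q i ∧ f Q ≤ P i) ∨ (Q i < f Q ∧ P i ≤ f Q) := by
    intro i
    rw [hfQ]
    rcases lt_trichotomy (P i) μ with h | h | h
    · have hnot : i ∉ A ∪ T := by
        intro hmem
        rcases Finset.mem_union.1 hmem with hmemA | hmemT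
        · simp only [hA, Finset.mem_filter] at hmemA
          linarith [hmemA.2]
        · have := hTS hmemT
          simp only [hS, Finset.mem_filter] at this
          linarith [le_of_eq this.2]
      have hQi : Q i = 0 := by simp only [hQ]; exact if_neg hnot
      exact Or.inr (Or.inr ⟨by rw [hQi]; linarith [(hP i).1], h.le⟩)
    · by_cases hmem : i ∈ A ∪ T
      · have hQi : Q i = 1 := by simp only [hQ]; exact if_pos hmem
        rcases eq_or_lt_of_le (h ▸ (hP i).2 : μ ≤ 1) with he | hlt
        · exact Or.inl (by rw [hQi, h, ← he])
        · exact Or.inr (Or.inl ⟨by rw [hQi]; exact hlt, h.ge⟩)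
      · have hQi : Q i = 0 := by simp only [hQ]; exact if_neg hmem
        rcases eq_or_lt_of_le (h ▸ (hP i).1 : 0 ≤ μ) with he | hlt
        · exact Or.inl (by rw [hQi, h, he])
        · exact Or.inr (Or.inr ⟨by rw [hQi]; exact hlt, h.le⟩)
    · have hmem : i ∈ A ∪ T := Finset.mem_union_left _ (by
        simp only [hA, Finset.mem_filter]; exact ⟨Finset.mem_univ i, h⟩)
      have hQi : Q i = 1 := by simp only [hQ]; exact if_pos hmem
      exact Or.inr (Or.inl ⟨by rw [hQi]; linarith [(hP i).2], h.le⟩)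
  rw [up_move u hu f hfr hfc hfsp hP hQv hcond, hfQ]
end

lemma countP_ofFn {N : ℕ} (g : Fin N → ℝ) (p : ℝ → Bool) :
    (List.ofFn g).countP p = (Finset.univ.filter fun i => p (g i) = true).card := by
  induction N with
  | zero => simp
  | succ N ih =>
    rw [List.ofFn_succ, List.countP_cons, ih (fun i => g i.succ)]
    rw [Finset.card_filter, Finset.card_filter, Fin.sum_univ_succ]
    by_cases h : p (g 0) = true <;> simp [h] <;> ring

lemma countP_ofFn' {N : ℕ} (g : Fin N → ℝ) (q : ℝ → Prop) [DecidablePred q] :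
    (List.ofFn g).countP (fun x => decide (q x)) = (Finset.univ.filter fun i => q (g i)).card := by
  rw [countP_ofFn]
  congr 1
  apply Finset.filter_congr
  intro i _
  simp

lemma fin_card_filter_lt (N c : ℕ) :
    (Finset.univ.filter fun j : Fin N => (j:ℕ) < c).card = min c N := by
  rw [Finset.card_filter, Fin.sum_univ_eq_sum_range (fun i => if i < c then 1 else 0)]
  rw [← Finset.card_filter]
  have : (Finset.range N).filter (fun i => i < c) = Finset.range (min c N) := by
    ext i
    simp only [Finset.mem_filter, Finset.mem_range, lt_min_iff]
    omega
  rw [this, Finset.card_range]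

lemma fin_card_filter_ge (N c : ℕ) (h : c ≤ N) :
    (Finset.univ.filter fun j : Fin N => c ≤ (j:ℕ)).card = N - c := by
  have h2 := Finset.card_filter_add_card_filter_not (s := (Finset.univ : Finset (Fin N)))
    (p := fun j : Fin N => (j:ℕ) < c)
  rw [fin_card_filter_lt N c] at h2
  simp only [not_lt, Finset.card_univ, Fintype.card_fin] at h2
  omega

lemma med_facts {N : ℕ} {L : List ℝ} (hL : L.length = 2 * N + 1) :
    med L ∈ L ∧ L.countP (fun x => decide (x < med L)) ≤ N ∧
      L.countP (fun x => decide (med L < x)) ≤ N := by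
  classical
  set M := L.insertionSort (· ≤ ·) with hM
  have hperm : M.Perm L := L.perm_insertionSort (· ≤ ·)
  have hsort : M.Pairwise (· ≤ ·) := L.pairwise_insertionSort (· ≤ ·)
  have hlen : M.length = 2 * N + 1 := hperm.length_eq.trans hL
  have hNlt : N < M.length := by omega
  have hmed : med L = M.get ⟨N, hNlt⟩ := by
    rw [med, ← hM, hL]
    have : (2 * N + 1) / 2 = N := by omega
    rw [this, List.getD_eq_getElem _ _ hNlt]
    rfl
  constructor
  · rw [hmed]
    exact hperm.mem_iff.1 (M.get_mem ⟨N, hNlt⟩)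
  constructor
  · rw [← hperm.countP_eq]
    have hsplit : M = M.take N ++ M.drop N := (List.take_append_drop N M).symm
    nth_rewrite 1 [hsplit]
    rw [List.countP_append]
    have hdrop : (M.drop N).countP (fun x => decide (x < med L)) = 0 := by
      rw [List.countP_eq_zero]
      intro x hx
      rcases List.mem_iff_getElem.1 hx with ⟨j, hj, rfl⟩
      rw [List.getElem_drop]
      simp only [decide_eq_true_eq, not_lt]
      rw [hmed]
      rcases Nat.eq_zero_or_pos j with rfl | hj0
      · simp
      · have : (⟨N, hNlt⟩ : Fin M.length) < ⟨N + j, by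
          have := hj; rw [List.length_drop] at this; omega⟩ := by
          simp [Fin.lt_def]; omega
        exact hsort.rel_get_of_lt this
    rw [hdrop]
    have := List.countP_le_length (p := fun x => decide (x < med L)) (l := M.take N)
    rw [List.length_take] at this
    omega
  · rw [← hperm.countP_eq]
    have hsplit : M = M.take (N+1) ++ M.drop (N+1) := (List.take_append_drop (N+1) M).symm
    nth_rewrite 1 [hsplit]
    rw [List.countP_append]
    have htake : (M.take (N+1)).countP (fun x => decide (med L < x)) = 0 := by
      rw [List.countP_eq_zero]
      intro x hx
      rcases List.mem_iff_getElem.1 hx with ⟨j, hj, rfl⟩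
      rw [List.getElem_take]
      simp only [decide_eq_true_eq, not_lt]
      rw [hmed]
      have hjlen : j < M.length := by
        have := hj; rw [List.length_take] at this; omega
      have hjN : j ≤ N := by
        have := hj; rw [List.length_take] at this; omega
      rcases eq_or_lt_of_le hjN with rfl | hjN'
      · simp
      · have : (⟨j, hjlen⟩ : Fin M.length) < ⟨N, hNlt⟩ := by
          simp [Fin.lt_def]; omega
        exact hsort.rel_get_of_lt this
    rw [htake]
    have := List.countP_le_length (p := fun x => decide (med L < x)) (l := M.drop (N+1))
    rw [List.length_drop] at this
    omega

/- ---------- main theorem ---------- -/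
set_option maxHeartbeats 2000000 in

theorem uniform_phantom_characterization {n : ℕ}
    (u : ℝ → ℝ → ℝ) (hu : ∀ p ∈ Set.Icc (0:ℝ) 1, SinglePeaked p (u p))
    (f : (Fin n → ℝ) → ℝ)
    (hfr : ∀ P : Fin n → ℝ, (∀ i, P i ∈ Set.Icc (0:ℝ) 1) → f P ∈ Set.Icc (0:ℝ) 1)
    (hfc : ContinuousOn f {P : Fin n → ℝ | ∀ i, P i ∈ Set.Icc (0:ℝ) 1})
    (hfsp : ∀ P : Fin n → ℝ, (∀ i, P i ∈ Set.Icc (0:ℝ) 1) → ∀ i, ∀ p' ∈ Set.Icc (0:ℝ) 1,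
        u (P i) (f (Function.update P i p')) ≤ u (P i) (f P))
    (hprop : ∀ P : Fin n → ℝ, (∀ i, P i = 0 ∨ P i = 1) →
        f P = ((Finset.univ.filter (fun i => P i = 1)).card : ℝ) / (n : ℝ)) :
    ∀ P : Fin n → ℝ, (∀ i, P i ∈ Set.Icc (0:ℝ) 1) →
      f P = med (List.ofFn P ++ List.ofFn (fun k : Fin (n + 1) => (k : ℝ) / (n : ℝ))) := by
  classical
  intro P hP
  set phant : Fin (n+1) → ℝ := fun k => (k : ℝ) / (n : ℝ) with hphant
  set L : List ℝ := List.ofFn P ++ List.ofFn phant with hLdef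
  have hL : L.length = 2 * n + 1 := by
    simp only [hLdef, List.length_append, List.length_ofFn]
    omega
  obtain ⟨hmem, hlt, hgt⟩ := med_facts hL
  set m : ℝ := med L with hm
  -- translate the counts to Finset cards
  have hltc : (Finset.univ.filter fun i => P i < m).card +
      (Finset.univ.filter fun j : Fin (n+1) => phant j < m).card ≤ n := by
    rw [hLdef, List.countP_append, countP_ofFn' P (fun x => x < m),
      countP_ofFn' phant (fun x => x < m)] at hlt
    exact hlt
  have hgtc : (Finset.univ.filter fun i => m < P i).card +
      (Finset.univ.filter fun j : Fin (n+1) => m < phant j).card ≤ n := by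
    rw [hLdef, List.countP_append, countP_ofFn' P (fun x => m < x),
      countP_ofFn' phant (fun x => m < x)] at hgt
    exact hgt
  rcases Nat.eq_zero_or_pos n with hn0 | hn
  · -- degenerate case n = 0
    subst hn0
    rw [hprop P (fun i => i.elim0)]
    have h1 : (Finset.univ.filter (fun i : Fin 0 => P i = 1)) = ∅ := rfl
    rw [h1]
    have h2 : L = [0] := by
      rw [hLdef]
      have : List.ofFn P = [] := by simp
      rw [this]
      simp [hphant, List.ofFn_succ]
    have hmz : m = 0 := by
      rw [hm, h2]
      simp [med, List.insertionSort, List.orderedInsert]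
    rw [hmz]
    simp
  have hnR : (0:ℝ) < n := by exact_mod_cast hn
  -- the two cases: m is a phantom, or m is one of the peaks
  by_cases hph : ∃ j : Fin (n+1), phant j = m
  · -- Case A : m is a phantom k/n
    obtain ⟨j, hj⟩ := hph
    set k : ℕ := (j : ℕ) with hk
    have hkn : k ≤ n := by omega
    have hjm : (k : ℝ) / (n : ℝ) = m := hj
    -- a ≤ k
    have hpa : n - k ≤ (Finset.univ.filter fun j' : Fin (n+1) => m < phant j').card := by
      have hsub : (Finset.univ.filter fun j' : Fin (n+1) => k + 1 ≤ (j' : ℕ)) ⊆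
          (Finset.univ.filter fun j' : Fin (n+1) => m < phant j') := by
        apply my_filter_mono
        intro j' hj'
        rw [← hjm, hphant]
        apply div_lt_div_of_pos_right ?_ hnR
        exact_mod_cast hj'
      have hcs := Finset.card_le_card hsub
      rw [fin_card_filter_ge (n+1) (k+1) (by omega)] at hcs
      omega
    have ha : (Finset.univ.filter fun i => (k:ℝ)/(n:ℝ) < P i).card ≤ k := by
      rw [hjm]
      omega
    -- b + k ≤ n
    have hpb : k ≤ (Finset.univ.filter fun j' : Fin (n+1) => phant j' < m).card := by
      have hsub : (Finset.univ.filter fun j' : Fin (n+1) => (j' : ℕ) < k) ⊆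
          (Finset.univ.filter fun j' : Fin (n+1) => phant j' < m) := by
        apply my_filter_mono
        intro j' hj'
        rw [← hjm, hphant]
        apply div_lt_div_of_pos_right ?_ hnR
        exact_mod_cast hj'
      have hcs := Finset.card_le_card hsub
      rw [fin_card_filter_lt (n+1) k, min_eq_left (by omega)] at hcs
      omega
    have hb : (Finset.univ.filter fun i => P i < (k:ℝ)/(n:ℝ)).card + k ≤ n := by
      rw [hjm]
      omega
    rw [up_quota u hu f hfr hfc hfsp hprop P hP k ha hb, hjm]
  · -- Case B : m is one of the peaks and lies strictly between two phantoms
    push_neg at hph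
    have hmemP : m ∈ List.ofFn P := by
      rcases List.mem_append.1 hmem with h | h
      · exact h
      · exfalso
        rw [List.mem_ofFn] at h
        obtain ⟨j, hj⟩ := h
        exact hph j hj
    rw [List.mem_ofFn] at hmemP
    obtain ⟨i0, hi0⟩ := hmemP
    have hm01 : m ∈ Set.Icc (0:ℝ) 1 := hi0 ▸ hP i0
    have hm0 : 0 < m := by
      rcases eq_or_lt_of_le hm01.1 with h | h
      · exact absurd (show phant 0 = m by simp [hphant, ← h]) (hph 0)
      · exact h
    have hm1 : m < 1 := by
      rcases eq_or_lt_of_le hm01.2 with h | h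
      · exact absurd (show phant ⟨n, by omega⟩ = m by
          simp only [hphant]
          rw [h]
          exact div_self (ne_of_gt hnR)) (hph ⟨n, by omega⟩)
      · exact h
    set c : ℕ := ⌈(n:ℝ) * m⌉₊ with hc
    have hnm0 : (0:ℝ) < (n:ℝ) * m := by positivity
    have hc1 : 1 ≤ c := by
      rw [hc]
      exact Nat.one_le_iff_ne_zero.2 (by positivity)
    have hcle : (n:ℝ) * m ≤ c := Nat.le_ceil _
    have hcn : c ≤ n := by
      rw [hc]
      apply Nat.ceil_le.2
      nlinarith
    have hcne : (n:ℝ) * m ≠ c := by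
      intro h
      apply hph ⟨c, by omega⟩
      simp only [hphant]
      field_simp
      linarith [h]
    have hclt : (n:ℝ) * m < c := lt_of_le_of_ne hcle hcne
    have hcm1 : (c:ℝ) - 1 < (n:ℝ) * m := by
      have := Nat.ceil_lt_add_one (le_of_lt hnm0)
      rw [← hc] at this
      linarith
    have hlow : ((c:ℝ) - 1) / n < m := by
      rw [div_lt_iff₀ hnR]
      nlinarith
    have hhigh : m < (c:ℝ) / n := by
      rw [lt_div_iff₀ hnR]
      nlinarith
    -- phantom counts
    have hpb : (Finset.univ.filter fun j : Fin (n+1) => phant j < m).card = c := by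
      have heq : (Finset.univ.filter fun j : Fin (n+1) => phant j < m) =
          (Finset.univ.filter fun j : Fin (n+1) => (j:ℕ) < c) := by
        apply Finset.filter_congr
        intro j _
        simp only [hphant]
        constructor
        · intro h
          have hjnm : ((j:ℕ):ℝ) < (n:ℝ) * m := by
            rw [div_lt_iff₀ hnR] at h
            linarith [h]
          have : ((j:ℕ):ℝ) < (c:ℝ) := lt_trans hjnm hclt
          exact_mod_cast this
        · intro h
          rw [div_lt_iff₀ hnR]
          have : ((j:ℕ):ℝ) ≤ (c:ℝ) - 1 := by
            have : (j:ℕ) + 1 ≤ c := h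
            have := (Nat.cast_le (α := ℝ)).2 this
            push_cast at this
            linarith
          nlinarith
      rw [heq, fin_card_filter_lt (n+1) c, min_eq_left (by omega)]
    have hpa : (Finset.univ.filter fun j : Fin (n+1) => m < phant j).card = n + 1 - c := by
      have heq : (Finset.univ.filter fun j : Fin (n+1) => m < phant j) =
          (Finset.univ.filter fun j : Fin (n+1) => c ≤ (j:ℕ)) := by
        apply Finset.filter_congr
        intro j _
        simp only [hphant]
        constructor
        · intro h
          have hjnm : (n:ℝ) * m < ((j:ℕ):ℝ) := by
            rw [lt_div_iff₀ hnR] at h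
            linarith [h]
          have : (c:ℝ) - 1 < ((j:ℕ):ℝ) := lt_trans hcm1 hjnm
          have h2 : (c:ℝ) < ((j:ℕ):ℝ) + 1 := by linarith
          have h3 : c < (j:ℕ) + 1 := by exact_mod_cast h2
          omega
        · intro h
          rw [lt_div_iff₀ hnR]
          have : (c:ℝ) ≤ ((j:ℕ):ℝ) := by exact_mod_cast h
          nlinarith
      rw [heq, fin_card_filter_ge (n+1) c (by omega)]
    set a : ℕ := (Finset.univ.filter fun i => m < P i).card with haa
    set b : ℕ := (Finset.univ.filter fun i => P i < m).card with hbb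
    have hac : a + 1 ≤ c := by omega
    have hbc : b + c ≤ n := by omega
    -- the three profiles
    set R : Fin n → ℝ := fun i => if m < P i then 1 else if P i < m then 0 else m with hR
    set Rc : Fin n → ℝ := fun i => if m < P i then 1 else if P i < m then 0 else (c:ℝ)/n
      with hRc
    set Rc' : Fin n → ℝ := fun i => if m < P i then 1 else if P i < m then 0
      else ((c-1:ℕ):ℝ)/n with hRc'
    have hcast : ((c-1:ℕ):ℝ) = (c:ℝ) - 1 := by
      push_cast [hc1]
      ring
    have hRv : UPValid R := by
      intro i
      simp only [hR]
      split
      · norm_num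
      split
      · norm_num
      · exact hm01
    have hRcv : UPValid Rc := by
      intro i
      simp only [hRc]
      split
      · norm_num
      split
      · norm_num
      · constructor
        · positivity
        · rw [div_le_one hnR]; exact_mod_cast hcn
    have hRc'v : UPValid Rc' := by
      intro i
      simp only [hRc']
      split
      · norm_num
      split
      · norm_num
      · constructor
        · positivity
        · rw [div_le_one hnR]
          have : ((c-1:ℕ):ℝ) ≤ (c:ℝ) := by exact_mod_cast Nat.sub_le c 1
          have : (c:ℝ) ≤ n := by exact_mod_cast hcn
          linarith [hcast]
    -- f Rc = c/n by quota
    have hfRc : f Rc = (c:ℝ)/n := by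
      apply up_quota u hu f hfr hfc hfsp hprop Rc hRcv c
      · calc (Finset.univ.filter fun i => (c:ℝ)/(n:ℝ) < Rc i).card
            ≤ (Finset.univ.filter fun i => m < P i).card := by
              apply Finset.card_le_card
              apply my_filter_mono
              intro i hi
              simp only [hRc] at hi
              rcases lt_trichotomy (P i) m with h | h | h
              · rw [if_neg (by linarith), if_pos h] at hi
                exact absurd hi (not_lt.2 (by positivity))
              · rw [if_neg (by linarith), if_neg (by linarith)] at hi
                exact absurd hi (lt_irrefl _)
              · exact h
          _ ≤ c := by omega
      · have : (Finset.univ.filter fun i => Rc i < (c:ℝ)/(n:ℝ)).card ≤ b := by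
          apply Finset.card_le_card
          apply my_filter_mono
          intro i hi
          simp only [hRc] at hi
          rcases lt_trichotomy (P i) m with h | h | h
          · exact h
          · rw [if_neg (by linarith), if_neg (by linarith)] at hi
            exact absurd hi (lt_irrefl _)
          · rw [if_pos h] at hi
            have : (c:ℝ)/n ≤ 1 := by rw [div_le_one hnR]; exact_mod_cast hcn
            linarith
        omega
    -- f Rc' = (c-1)/n by quota
    have hfRc' : f Rc' = ((c-1:ℕ):ℝ)/n := by
      apply up_quota u hu f hfr hfc hfsp hprop Rc' hRc'v (c-1)
      · calc (Finset.univ.filter fun i => ((c-1:ℕ):ℝ)/(n:ℝ) < Rc' i).card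
            ≤ (Finset.univ.filter fun i => m < P i).card := by
              apply Finset.card_le_card
              apply my_filter_mono
              intro i hi
              simp only [hRc'] at hi
              rcases lt_trichotomy (P i) m with h | h | h
              · rw [if_neg (by linarith), if_pos h] at hi
                exact absurd hi (not_lt.2 (by positivity))
              · rw [if_neg (by linarith), if_neg (by linarith)] at hi
                exact absurd hi (lt_irrefl _)
              · exact h
          _ ≤ c - 1 := by omega
      · have : (Finset.univ.filter fun i => Rc' i < ((c-1:ℕ):ℝ)/(n:ℝ)).card ≤ b := by
          apply Finset.card_le_card
          apply my_filter_mono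
          intro i hi
          simp only [hRc'] at hi
          rcases lt_trichotomy (P i) m with h | h | h
          · exact h
          · rw [if_neg (by linarith), if_neg (by linarith)] at hi
            exact absurd hi (lt_irrefl _)
          · rw [if_pos h] at hi
            have h1 : ((c-1:ℕ):ℝ)/n ≤ (c:ℝ)/n := by
              apply div_le_div_of_nonneg_right ?_ hnR.le
              rw [hcast]; linarith
            have h2 : (c:ℝ)/n ≤ 1 := by rw [div_le_one hnR]; exact_mod_cast hcn
            linarith
        omega
    -- f R = m
    have hfR : f R = m := by
      rcases lt_trichotomy (f R) m with hx | hx | hx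
      · exfalso
        have hmove : f Rc = f R := by
          apply up_move u hu f hfr hfc hfsp hRcv hRv
          intro i
          rcases lt_trichotomy (P i) m with h | h | h
          · exact Or.inl (by simp only [hR, hRc]; rw [if_neg (by linarith), if_pos h,
              if_neg (by linarith), if_pos h])
          · refine Or.inr (Or.inl ⟨?_, ?_⟩)
            · simp only [hR]
              rw [if_neg (by linarith), if_neg (by linarith)]
              exact hx
            · simp only [hRc]
              rw [if_neg (by linarith), if_neg (by linarith)]
              linarith
          · exact Or.inl (by simp only [hR, hRc]; rw [if_pos h, if_pos h])
        rw [hfRc] at hmove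
        linarith
      · exact hx
      · exfalso
        have hmove : f Rc' = f R := by
          apply up_move u hu f hfr hfc hfsp hRc'v hRv
          intro i
          rcases lt_trichotomy (P i) m with h | h | h
          · exact Or.inl (by simp only [hR, hRc']; rw [if_neg (by linarith), if_pos h,
              if_neg (by linarith), if_pos h])
          · refine Or.inr (Or.inr ⟨?_, ?_⟩)
            · simp only [hR]
              rw [if_neg (by linarith), if_neg (by linarith)]
              exact hx
            · simp only [hRc']
              rw [hcast]
              rw [if_neg (by linarith), if_neg (by linarith)]
              linarith
          · exact Or.inl (by simp only [hR, hRc']; rw [if_pos h, if_pos h])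
        rw [hfRc', hcast] at hmove
        linarith
    -- finally move from R to P
    have hfinal : f P = f R := by
      apply up_move u hu f hfr hfc hfsp hP hRv
      intro i
      rw [hfR]
      rcases lt_trichotomy (P i) m with h | h | h
      · refine Or.inr (Or.inr ⟨?_, h.le⟩)
        simp only [hR]
        rw [if_neg (by linarith), if_pos h]
        exact hm0
      · exact Or.inl (by simp only [hR]; rw [if_neg (by linarith), if_neg (by linarith), h])
      · refine Or.inr (Or.inl ⟨?_, h.le⟩)
        simp only [hR]
        rw [if_pos h]
        exact hm1
    rw [hfinal, hfR]
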